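/- arXiv:2406.07150 — 2 statements merged into one kernel-verified Lean document; each statement's English description precedes it below -/
import Mathlib

section
/- For square-integrable random variables A, B and a measurable event C, |Cov(A·1_C, B)| ≤ E[A^4]^{1/4} · Var(B)^{1/2} · P(C)^{1/4}, assuming A has finite fourth moment. -/
open MeasureTheory
open scoped ENNReal

lemma stmt3_abs_rpow_two (x : ℝ) : |x| ^ (2:ℝ) = x ^ 2 := by
  rw [show (2:ℝ) = ((2:ℕ):ℝ) by norm_num, Real.rpow_natCast, sq_abs]

lemma stmt3_sq_rpow_two (x : ℝ) : (x ^ 2) ^ (2:ℝ) = x ^ 4 := by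
  rw [show (2:ℝ) = ((2:ℕ):ℝ) by norm_num, Real.rpow_natCast]; ring

lemma stmt3_norm_rpow_four (x : ℝ) : ‖x‖ ^ (4:ℝ) = x ^ 4 := by
  rw [Real.norm_eq_abs, show (4:ℝ) = ((4:ℕ):ℝ) by norm_num, Real.rpow_natCast, ← abs_pow,
    abs_of_nonneg (by positivity)]

theorem stmt_3 {Ω : Type*} [MeasurableSpace Ω] (P : Measure Ω) [IsProbabilityMeasure P]
    (A B : Ω → ℝ) (C : Set Ω) (hC : MeasurableSet C)
    (hA : MemLp A 4 P) (hB : MemLp B 2 P) :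
    |(∫ ω, (A ω * Set.indicator C (fun _ => (1 : ℝ)) ω) * B ω ∂P)
        - (∫ ω, A ω * Set.indicator C (fun _ => (1 : ℝ)) ω ∂P) * (∫ ω, B ω ∂P)| ≤
      (∫ ω, A ω ^ 4 ∂P) ^ ((1 : ℝ) / 4)
        * ((∫ ω, B ω ^ 2 ∂P) - (∫ ω, B ω ∂P) ^ 2) ^ ((1 : ℝ) / 2)
        * (P C).toReal ^ ((1 : ℝ) / 4) := by
  set m : ℝ := ∫ ω, B ω ∂P with hm
  set I : Ω → ℝ := Set.indicator C (fun _ => (1 : ℝ)) with hI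
  set X : Ω → ℝ := fun ω => A ω * I ω with hX
  have hImeas : AEStronglyMeasurable I P :=
    ((measurable_const.indicator hC).aestronglyMeasurable)
  have hIbound : ∀ ω, ‖I ω‖ ≤ 1 := by
    intro ω
    by_cases h : ω ∈ C <;> simp [hI, Set.indicator_of_mem, Set.indicator_of_notMem, h]
  have hA2 : MemLp A 2 P := hA.mono_exponent (by norm_num)
  have hXmeas : AEStronglyMeasurable X P := hA.1.mul hImeas
  have hX2 : MemLp X 2 P := by
    refine hA2.mono hXmeas ?_
    refine Filter.Eventually.of_forall fun ω => ?_
    calc ‖X ω‖ = ‖A ω‖ * ‖I ω‖ := by simp [hX, abs_mul]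
    _ ≤ ‖A ω‖ * 1 := mul_le_mul_of_nonneg_left (hIbound ω) (norm_nonneg _)
    _ = ‖A ω‖ := by ring
  have hX1 : Integrable X P := hX2.integrable (by norm_num)
  have hB1 : Integrable B P := hB.integrable (by norm_num)
  have hhalf : (1:ℝ≥0∞)/2 + 1/2 = 1 := by
    rw [ENNReal.div_add_div_same, one_add_one_eq_two]
    exact ENNReal.div_self two_ne_zero ENNReal.ofNat_ne_top
  have hXB : Integrable (fun ω => X ω * B ω) P := by
    have := hB.smul (φ := X) hX2 (r := 1) (hpqr := ⟨by rw [inv_one, ← one_div, hhalf]⟩)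
    rw [memLp_one_iff_integrable] at this
    exact this
  have hBm : MemLp (fun ω => B ω - m) 2 P := hB.sub (memLp_const m)
  have key : (∫ ω, X ω * B ω ∂P) - (∫ ω, X ω ∂P) * m
      = ∫ ω, X ω * (B ω - m) ∂P := by
    simp_rw [mul_sub]
    rw [integral_sub hXB (hX1.mul_const m), integral_mul_const]
  have conj2 : Real.HolderConjugate 2 2 := Real.HolderConjugate.two_two
  have htwo : ENNReal.ofReal (2:ℝ) = 2 := by norm_num
  -- Cauchy-Schwarz step
  have hCS : |∫ ω, X ω * (B ω - m) ∂P|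
      ≤ (∫ ω, X ω ^ 2 ∂P) ^ ((1:ℝ)/2) * (∫ ω, (B ω - m) ^ 2 ∂P) ^ ((1:ℝ)/2) := by
    have habs : |∫ ω, X ω * (B ω - m) ∂P| ≤ ∫ ω, |X ω| * |B ω - m| ∂P := by
      calc |∫ ω, X ω * (B ω - m) ∂P| = ‖∫ ω, X ω * (B ω - m) ∂P‖ := (Real.norm_eq_abs _).symm
        _ ≤ ∫ ω, ‖X ω * (B ω - m)‖ ∂P := norm_integral_le_integral_norm _
        _ = ∫ ω, |X ω| * |B ω - m| ∂P := by
            refine integral_congr_ae (Filter.Eventually.of_forall fun ω => ?_)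
            simp [Real.norm_eq_abs, abs_mul]
    refine habs.trans ?_
    have h := integral_mul_le_Lp_mul_Lq_of_nonneg (μ := P) conj2
      (f := fun ω => |X ω|) (g := fun ω => |B ω - m|)
      (Filter.Eventually.of_forall fun ω => abs_nonneg _)
      (Filter.Eventually.of_forall fun ω => abs_nonneg _)
      (htwo ▸ hX2.abs) (htwo ▸ hBm.abs)
    calc ∫ ω, |X ω| * |B ω - m| ∂P
        ≤ (∫ ω, |X ω| ^ (2:ℝ) ∂P) ^ ((1:ℝ)/2) * (∫ ω, |B ω - m| ^ (2:ℝ) ∂P) ^ ((1:ℝ)/2) := h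
      _ = (∫ ω, X ω ^ 2 ∂P) ^ ((1:ℝ)/2) * (∫ ω, (B ω - m) ^ 2 ∂P) ^ ((1:ℝ)/2) := by
          congr 1
          · congr 1
            exact integral_congr_ae (Filter.Eventually.of_forall fun ω => by
              simp [stmt3_abs_rpow_two])
          · congr 1
            exact integral_congr_ae (Filter.Eventually.of_forall fun ω => by
              simp [stmt3_abs_rpow_two])
  -- bound ∫ X^2
  have hA4int : Integrable (fun ω => A ω ^ 4) P := by
    have h4 := hA.norm_rpow (by norm_num) (by norm_num)
    rw [memLp_one_iff_integrable] at h4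
    refine h4.congr (Filter.Eventually.of_forall fun ω => ?_)
    simp only [ENNReal.toReal_ofNat, stmt3_norm_rpow_four]
  have hA4nonneg : (0:ℝ) ≤ ∫ ω, A ω ^ 4 ∂P :=
    integral_nonneg fun ω => by positivity
  have hmeas2 : AEStronglyMeasurable (fun ω => A ω ^ 2) P :=
    (hA.1.mul hA.1).congr (Filter.Eventually.of_forall fun ω => by
      rw [Pi.mul_apply, ← pow_two])
  have hAsq2 : MemLp (fun ω => A ω ^ 2) 2 P := by
    rw [memLp_two_iff_integrable_sq hmeas2]
    exact hA4int.congr (Filter.Eventually.of_forall fun ω => by ring)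
  have hI2 : MemLp I 2 P := by
    refine (memLp_const (1:ℝ)).mono hImeas ?_
    exact Filter.Eventually.of_forall fun ω => by simpa using hIbound ω
  have hXsq : (∫ ω, X ω ^ 2 ∂P)
      ≤ (∫ ω, A ω ^ 4 ∂P) ^ ((1:ℝ)/2) * (P C).toReal ^ ((1:ℝ)/2) := by
    have h := integral_mul_le_Lp_mul_Lq_of_nonneg (μ := P) conj2
      (f := fun ω => A ω ^ 2) (g := I)
      (Filter.Eventually.of_forall fun ω => by positivity)
      (Filter.Eventually.of_forall fun ω => by
        by_cases h : ω ∈ C <;>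
          simp [hI, Set.indicator_of_mem, Set.indicator_of_notMem, h])
      (htwo ▸ hAsq2) (htwo ▸ hI2)
    have e1 : (∫ ω, X ω ^ 2 ∂P) = ∫ ω, A ω ^ 2 * I ω ∂P := by
      refine integral_congr_ae (Filter.Eventually.of_forall fun ω => ?_)
      by_cases h : ω ∈ C <;>
        simp [hX, hI, Set.indicator_of_mem, Set.indicator_of_notMem, h]
    have e2 : (∫ ω, (A ω ^ 2) ^ (2:ℝ) ∂P) = ∫ ω, A ω ^ 4 ∂P :=
      integral_congr_ae (Filter.Eventually.of_forall fun ω => by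
        simp only [stmt3_sq_rpow_two])
    have e3 : (∫ ω, I ω ^ (2:ℝ) ∂P) = (P C).toReal := by
      have e3' : (∫ ω, I ω ^ (2:ℝ) ∂P) = ∫ ω, I ω ∂P := by
        refine integral_congr_ae (Filter.Eventually.of_forall fun ω => ?_)
        by_cases h : ω ∈ C <;>
          simp [hI, Set.indicator_of_mem, Set.indicator_of_notMem, h]
      rw [e3', hI]
      simpa [measureReal_def, Pi.one_def] using integral_indicator_one (μ := P) hC
    rw [e1, ← e2, ← e3]
    exact h
  have hXsqnonneg : (0:ℝ) ≤ ∫ ω, X ω ^ 2 ∂P := integral_nonneg fun ω => by positivity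
  have hXsqrt : (∫ ω, X ω ^ 2 ∂P) ^ ((1:ℝ)/2)
      ≤ (∫ ω, A ω ^ 4 ∂P) ^ ((1:ℝ)/4) * (P C).toReal ^ ((1:ℝ)/4) := by
    have h := Real.rpow_le_rpow hXsqnonneg hXsq (by norm_num : (0:ℝ) ≤ 1/2)
    refine h.trans_eq ?_
    rw [Real.mul_rpow (by positivity) (by positivity),
      ← Real.rpow_mul hA4nonneg, ← Real.rpow_mul ENNReal.toReal_nonneg]
    norm_num
  -- variance identity
  have hVar : (∫ ω, (B ω - m) ^ 2 ∂P) = (∫ ω, B ω ^ 2 ∂P) - m ^ 2 := by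
    have expand : (fun ω => (B ω - m) ^ 2)
        = fun ω => B ω ^ 2 - 2 * m * B ω + m ^ 2 := by
      funext ω; ring
    have i1 : Integrable (fun ω => B ω ^ 2 - 2 * m * B ω) P :=
      hB.integrable_sq.sub (hB1.const_mul (2 * m))
    rw [expand, integral_add i1 (integrable_const _),
      integral_sub hB.integrable_sq (hB1.const_mul (2 * m)),
      integral_const_mul, integral_const]
    simp only [measure_univ, probReal_univ, ENNReal.toReal_one, smul_eq_mul, one_mul, ← hm]
    ring
  have hVarNonneg : (0:ℝ) ≤ ∫ ω, (B ω - m) ^ 2 ∂P := integral_nonneg fun ω => by positivity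
  show |(∫ ω, X ω * B ω ∂P) - (∫ ω, X ω ∂P) * m| ≤
    (∫ ω, A ω ^ 4 ∂P) ^ ((1:ℝ)/4) * ((∫ ω, B ω ^ 2 ∂P) - m ^ 2) ^ ((1:ℝ)/2)
      * (P C).toReal ^ ((1:ℝ)/4)
  rw [key]
  calc |∫ ω, X ω * (B ω - m) ∂P|
      ≤ (∫ ω, X ω ^ 2 ∂P) ^ ((1:ℝ)/2) * (∫ ω, (B ω - m) ^ 2 ∂P) ^ ((1:ℝ)/2) := hCS
    _ ≤ ((∫ ω, A ω ^ 4 ∂P) ^ ((1:ℝ)/4) * (P C).toReal ^ ((1:ℝ)/4))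
          * (∫ ω, (B ω - m) ^ 2 ∂P) ^ ((1:ℝ)/2) :=
        mul_le_mul_of_nonneg_right hXsqrt (Real.rpow_nonneg hVarNonneg _)
    _ = (∫ ω, A ω ^ 4 ∂P) ^ ((1:ℝ)/4)
          * ((∫ ω, B ω ^ 2 ∂P) - m ^ 2) ^ ((1:ℝ)/2)
          * (P C).toReal ^ ((1:ℝ)/4) := by rw [hVar]; ring
end

section
/- The map Φ(S₁, S₂) = (1/(s² + Δt²))·(s² S₁ + Δt² S₂ + Δt S₁ × S₂, s² S₂ + Δt² S₁ + Δt S₂ × S₁), with s² = (1 + S₁·S₂)/2, maps pairs of unit vectors to pairs of unit vectors: if |S₁| = |S₂| = 1 and S₁·S₂ ≠ -1, then both components of Φ(S₁, S₂) have norm 1. -/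
/-- Dot product on `ℝ³`. -/
def dot3 (a b : Fin 3 → ℝ) : ℝ := a 0 * b 0 + a 1 * b 1 + a 2 * b 2

/-- The Krajnik-Prosen update map. -/
noncomputable def KPmap (Δt : ℝ) (S₁ S₂ : Fin 3 → ℝ) : (Fin 3 → ℝ) × (Fin 3 → ℝ) :=
  let s2 : ℝ := (1 + dot3 S₁ S₂) / 2
  ((1 / (s2 + Δt ^ 2)) • (s2 • S₁ + Δt ^ 2 • S₂ + Δt • (crossProduct S₁ S₂)),
   (1 / (s2 + Δt ^ 2)) • (s2 • S₂ + Δt ^ 2 • S₁ + Δt • (crossProduct S₂ S₁)))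

lemma kp_key (t s a0 a1 a2 b0 b1 b2 : ℝ) (h₁ : a0^2+a1^2+a2^2 = 1) (h₂ : b0^2+b1^2+b2^2 = 1)
    (hs : s = (1+(a0*b0+a1*b1+a2*b2))/2) :
    (s*a0+t^2*b0+t*(a1*b2-a2*b1))^2 + (s*a1+t^2*b1+t*(a2*b0-a0*b2))^2
      + (s*a2+t^2*b2+t*(a0*b1-a1*b0))^2 = (s+t^2)^2 := by
  subst hs
  linear_combination (((1+(a0*b0+a1*b1+a2*b2))/2)^2 + t^2*(b0^2+b1^2+b2^2)) * h₁ + (t^4 + t^2) * h₂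

lemma kp_cross0 (a b : Fin 3 → ℝ) : crossProduct a b 0 = a 1 * b 2 - a 2 * b 1 := by
  simp [crossProduct]
lemma kp_cross1 (a b : Fin 3 → ℝ) : crossProduct a b 1 = a 2 * b 0 - a 0 * b 2 := by
  simp [crossProduct]
lemma kp_cross2 (a b : Fin 3 → ℝ) : crossProduct a b 2 = a 0 * b 1 - a 1 * b 0 := by
  simp [crossProduct]

theorem stmt_12 (Δt : ℝ) (hΔt : 0 < Δt) (S₁ S₂ : Fin 3 → ℝ)
    (h₁ : dot3 S₁ S₁ = 1) (h₂ : dot3 S₂ S₂ = 1) (h₁₂ : dot3 S₁ S₂ ≠ -1) :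
    dot3 (KPmap Δt S₁ S₂).1 (KPmap Δt S₁ S₂).1 = 1 ∧
    dot3 (KPmap Δt S₁ S₂).2 (KPmap Δt S₁ S₂).2 = 1 := by
  set s : ℝ := (1 + dot3 S₁ S₂) / 2 with hs
  have h₁' : S₁ 0 ^ 2 + S₁ 1 ^ 2 + S₁ 2 ^ 2 = 1 := by
    simpa [dot3, sq] using h₁
  have h₂' : S₂ 0 ^ 2 + S₂ 1 ^ 2 + S₂ 2 ^ 2 = 1 := by
    simpa [dot3, sq] using h₂
  have hd : s + Δt ^ 2 ≠ 0 := by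
    have h0 : -1 ≤ dot3 S₁ S₂ := by
      simp only [dot3] at *
      nlinarith [sq_nonneg (S₁ 0 + S₂ 0), sq_nonneg (S₁ 1 + S₂ 1), sq_nonneg (S₁ 2 + S₂ 2)]
    have : 0 < s + Δt ^ 2 := by
      rw [hs]; nlinarith [pow_pos hΔt 2]
    exact ne_of_gt this
  have hf : ∀ i, (KPmap Δt S₁ S₂).1 i
      = (1/(s+Δt^2)) * (s * S₁ i + Δt^2 * S₂ i + Δt * crossProduct S₁ S₂ i) := by
    intro i
    simp [KPmap, ← hs, mul_comm]
    ring
  have hg : ∀ i, (KPmap Δt S₁ S₂).2 i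
      = (1/(s+Δt^2)) * (s * S₂ i + Δt^2 * S₁ i + Δt * crossProduct S₂ S₁ i) := by
    intro i
    simp [KPmap, ← hs, mul_comm]
    ring
  have hs1 : s = (1 + (S₁ 0 * S₂ 0 + S₁ 1 * S₂ 1 + S₁ 2 * S₂ 2)) / 2 := by
    rw [hs]; simp [dot3]
  have hs2 : s = (1 + (S₂ 0 * S₁ 0 + S₂ 1 * S₁ 1 + S₂ 2 * S₁ 2)) / 2 := by
    rw [hs1]; ring
  constructor
  · have H : dot3 (KPmap Δt S₁ S₂).1 (KPmap Δt S₁ S₂).1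
        = (1/(s+Δt^2))^2 * ((s * S₁ 0 + Δt^2 * S₂ 0 + Δt * (S₁ 1 * S₂ 2 - S₁ 2 * S₂ 1))^2
          + (s * S₁ 1 + Δt^2 * S₂ 1 + Δt * (S₁ 2 * S₂ 0 - S₁ 0 * S₂ 2))^2
          + (s * S₁ 2 + Δt^2 * S₂ 2 + Δt * (S₁ 0 * S₂ 1 - S₁ 1 * S₂ 0))^2) := by
      simp only [dot3, hf, kp_cross0, kp_cross1, kp_cross2]
      ring
    rw [H, kp_key Δt s (S₁ 0) (S₁ 1) (S₁ 2) (S₂ 0) (S₂ 1) (S₂ 2) h₁' h₂' hs1]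
    field_simp
  · have H : dot3 (KPmap Δt S₁ S₂).2 (KPmap Δt S₁ S₂).2
        = (1/(s+Δt^2))^2 * ((s * S₂ 0 + Δt^2 * S₁ 0 + Δt * (S₂ 1 * S₁ 2 - S₂ 2 * S₁ 1))^2
          + (s * S₂ 1 + Δt^2 * S₁ 1 + Δt * (S₂ 2 * S₁ 0 - S₂ 0 * S₁ 2))^2
          + (s * S₂ 2 + Δt^2 * S₁ 2 + Δt * (S₂ 0 * S₁ 1 - S₂ 1 * S₁ 0))^2) := by
      simp only [dot3, hg, kp_cross0, kp_cross1, kp_cross2]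
      ring
    rw [H, kp_key Δt s (S₂ 0) (S₂ 1) (S₂ 2) (S₁ 0) (S₁ 1) (S₁ 2) h₂' h₁' hs2]
    field_simp
end
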